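/- For every even integer n ≥ 4 there exists a nonzero polynomial P in three variables X, Y, L over ℝ with total degree 2n, with degree 2 in the variable Y, and with degree 2(n − 1) in the variable X, such that for all real x with −1 < x < 1, all real l with 0 ≤ l ≤ 2·√(1−x²), and all real x̃, if x̃ = √(1−x²)·sin(n·arcsin(l/(2·√(1−x²)))) then P(x, x̃, l) = 0. (Thus for even n the defining equation of an n-gonal Goldberg dipyramid reduces to an algebraic equation of order 2n, of second order with respect to the aperture x̃ and of order 2(n − 1) with respect to the height x.) -/

import Mathlib

open MvPolynomial

private lemma natDegree_T_pair (n : ℕ) : (Polynomial.Chebyshev.T ℝ n).natDegree ≤ n ∧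
    (Polynomial.Chebyshev.T ℝ (n+1 : ℕ)).natDegree ≤ n+1 := by
  induction n with
  | zero =>
    constructor
    · simp [Polynomial.Chebyshev.T_zero]
    · norm_num [Polynomial.Chebyshev.T_one, Polynomial.natDegree_X_le]
  | succ m ih =>
    refine ⟨by exact_mod_cast ih.2, ?_⟩
    have hcast : ((m + 2 : ℕ) : ℤ) = (m : ℤ) + 2 := by push_cast; ring
    rw [hcast, Polynomial.Chebyshev.T_add_two]
    refine (Polynomial.natDegree_sub_le _ _).trans (max_le ?_ ?_)
    · refine (Polynomial.natDegree_mul_le).trans ?_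
      have h1 : (2 * Polynomial.X : Polynomial ℝ).natDegree ≤ 1 := by
        refine (Polynomial.natDegree_mul_le).trans ?_
        simp [Polynomial.natDegree_X_le]
      have h2 : (Polynomial.Chebyshev.T ℝ ((m:ℤ)+1)).natDegree ≤ m + 1 := by
        have := ih.2; push_cast at this ⊢; exact this
      omega
    · have := ih.1; omega

private lemma natDegree_T_le (n : ℕ) : (Polynomial.Chebyshev.T ℝ n).natDegree ≤ n :=
  (natDegree_T_pair n).1

/-- `Qg n` is the polynomial `z ↦ T_n(1 - 2z)`, so that `Qg n (sin² θ) = cos (2nθ)`. -/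
noncomputable def Qg (n : ℕ) : Polynomial ℝ :=
  (Polynomial.Chebyshev.T ℝ n).comp (1 - 2 * Polynomial.X)

private lemma natDegree_Qg_le (n : ℕ) : (Qg n).natDegree ≤ n := by
  refine (Polynomial.natDegree_comp_le).trans ?_
  have h1 : (1 - 2 * Polynomial.X : Polynomial ℝ).natDegree ≤ 1 := by
    refine (Polynomial.natDegree_sub_le _ _).trans ?_
    simp only [Polynomial.natDegree_one]
    refine max_le (by norm_num) ((Polynomial.natDegree_mul_le).trans ?_)
    simp [Polynomial.natDegree_X_le]
  have := natDegree_T_le n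
  calc (Polynomial.Chebyshev.T ℝ n).natDegree * (1 - 2 * Polynomial.X : Polynomial ℝ).natDegree
      ≤ n * 1 := Nat.mul_le_mul this h1
    _ = n := by ring

private lemma Qg_coeff_zero (n : ℕ) : (Qg n).coeff 0 = 1 := by
  rw [Polynomial.coeff_zero_eq_eval_zero, Qg, Polynomial.eval_comp]
  have h0 : (1 - 2 * Polynomial.X : Polynomial ℝ).eval 0 = Real.cos 0 := by simp
  rw [h0, Polynomial.Chebyshev.T_real_cos]
  simp

private lemma Qg_eval (n : ℕ) (s : ℝ) (h1 : -1 ≤ s) (h2 : s ≤ 1) :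
    (Qg n).eval (s^2) = Real.cos (2 * n * Real.arcsin s) := by
  rw [Qg, Polynomial.eval_comp]
  have hsin : Real.sin (Real.arcsin s) = s := Real.sin_arcsin h1 h2
  have hpy := Real.sin_sq_add_cos_sq (Real.arcsin s)
  have hc2 := Real.cos_two_mul (Real.arcsin s)
  have heval : (1 - 2 * Polynomial.X : Polynomial ℝ).eval (s^2) = Real.cos (2 * Real.arcsin s) := by
    simp only [Polynomial.eval_sub, Polynomial.eval_one, Polynomial.eval_mul,
      Polynomial.eval_ofNat, Polynomial.eval_X]
    rw [hc2]; nlinarith [hsin]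
  rw [heval, Polynomial.Chebyshev.T_real_cos]
  push_cast
  ring_nf

private lemma coeff_U_pow (N : ℕ) :
    MvPolynomial.coeff (Finsupp.single 0 (2*N)) ((1 - X 0 ^ 2 : MvPolynomial (Fin 3) ℝ) ^ N)
      = (-1 : ℝ)^N := by
  induction N with
  | zero => simp
  | succ k ih =>
    have hU : (1 - X 0 ^ 2 : MvPolynomial (Fin 3) ℝ) ^ (k+1)
        = (1 - X 0 ^ 2) ^ k - (1 - X 0 ^ 2) ^ k * X 0 ^ 2 := by ring
    have htdU : (1 - X 0 ^ 2 : MvPolynomial (Fin 3) ℝ).totalDegree ≤ 2 := by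
      refine (totalDegree_sub _ _).trans ?_
      simp [totalDegree_one, totalDegree_X_pow]
    have htd : ((1 - X 0 ^ 2 : MvPolynomial (Fin 3) ℝ) ^ k).totalDegree ≤ 2 * k := by
      refine (totalDegree_pow _ _).trans ?_
      calc k * (1 - X 0 ^ 2 : MvPolynomial (Fin 3) ℝ).totalDegree ≤ k * 2 :=
            Nat.mul_le_mul_left k htdU
        _ = 2 * k := by ring
    have h1 : MvPolynomial.coeff (Finsupp.single 0 (2*(k+1)))
        ((1 - X 0 ^ 2 : MvPolynomial (Fin 3) ℝ) ^ k) = 0 := by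
      refine coeff_eq_zero_of_totalDegree_lt ?_
      rw [Finsupp.support_single_ne_zero _ (by omega : 2*(k+1) ≠ 0)]
      simp only [Finset.sum_singleton, Finsupp.single_eq_same]
      omega
    have h2 : MvPolynomial.coeff (Finsupp.single 0 (2*(k+1)))
        ((1 - X 0 ^ 2 : MvPolynomial (Fin 3) ℝ) ^ k * X 0 ^ 2) = (-1:ℝ)^k := by
      have hsplit : (1 - X 0 ^ 2 : MvPolynomial (Fin 3) ℝ) ^ k * X 0 ^ 2
          = ((1 - X 0 ^ 2) ^ k * X 0) * X 0 := by ring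
      rw [hsplit, show (2*(k+1)) = (2*k + 1) + 1 by ring, Finsupp.single_add, coeff_mul_X,
        Finsupp.single_add, coeff_mul_X, ih]
    rw [hU, coeff_sub, h1, h2]
    ring

private lemma degreeOf_U_one :
    degreeOf 1 ((1 : MvPolynomial (Fin 3) ℝ) - X 0 ^ 2) = 0 := by
  refine Nat.le_zero.mp ?_
  refine (degreeOf_sub_le _ _ _).trans (max_le ?_ ?_)
  · simpa using degreeOf_C (1:ℝ) (1 : Fin 3)
  · refine (degreeOf_pow_le _ _ _).trans ?_
    rw [degreeOf_X]
    norm_num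

private lemma degreeOf_U_zero :
    degreeOf 0 ((1 : MvPolynomial (Fin 3) ℝ) - X 0 ^ 2) ≤ 2 := by
  refine (degreeOf_sub_le _ _ _).trans (max_le ?_ ?_)
  · have h := degreeOf_C (1:ℝ) (0 : Fin 3); simp only [map_one] at h; omega
  · refine (degreeOf_pow_le _ _ _).trans ?_
    rw [degreeOf_X]
    norm_num

set_option maxHeartbeats 1000000 in
/-- For even `n`, the defining equation of an `n`-gonal Goldberg dipyramid
reduces to an algebraic equation of total degree `2n`, of second degree in the
aperture `x̃` (variable `1`) and of degree `2(n − 1)` in the height `x`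
(variable `0`), the base length `l` being variable `2`. -/
theorem goldberg_equation_algebraic_even (n : ℕ) (hn : 4 ≤ n) (heven : Even n) :
    ∃ P : MvPolynomial (Fin 3) ℝ, P ≠ 0 ∧
      P.totalDegree = 2 * n ∧
      MvPolynomial.degreeOf 1 P = 2 ∧
      MvPolynomial.degreeOf 0 P = 2 * (n - 1) ∧
      ∀ x : ℝ, -1 < x → x < 1 → ∀ l : ℝ, 0 ≤ l → l ≤ 2 * Real.sqrt (1 - x ^ 2) →
        ∀ xt : ℝ,
          xt = Real.sqrt (1 - x ^ 2) *
              Real.sin (n * Real.arcsin (l / (2 * Real.sqrt (1 - x ^ 2)))) →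
            MvPolynomial.eval ![x, xt, l] P = 0 := by
  set U : MvPolynomial (Fin 3) ℝ := 1 - X 0 ^ 2 with hUdef
  set S : MvPolynomial (Fin 3) ℝ :=
    ∑ j ∈ Finset.Icc 1 n, C ((Qg n).coeff j / 4 ^ j) * X 2 ^ (2*j) * U ^ (n - j) with hSdef
  set T1 : MvPolynomial (Fin 3) ℝ := C 2 * X 1 ^ 2 * U ^ (n-1) with hT1
  set m₀ : Fin 3 →₀ ℕ := Finsupp.single 0 (2*(n-1)) + Finsupp.single 1 2 with hm₀
  have hm₀0 : m₀ 0 = 2*(n-1) := by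
    simp [hm₀, Finsupp.single_apply]
  have hm₀1 : m₀ 1 = 2 := by
    simp [hm₀, Finsupp.single_apply]
  -- totalDegree of U
  have htdU : U.totalDegree ≤ 2 := by
    rw [hUdef]
    refine (totalDegree_sub _ _).trans ?_
    simp [totalDegree_one, totalDegree_X_pow]
  -- coefficient of the first summand at m₀
  have hcoeffT1 : coeff m₀ T1 = 2 * (-1:ℝ)^(n-1) := by
    rw [hT1, C_mul_X_pow_eq_monomial, hm₀,
      add_comm (Finsupp.single (0 : Fin 3) (2*(n-1))) (Finsupp.single 1 2),
      coeff_monomial_mul, hUdef, coeff_U_pow]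
  -- variable 1 does not occur in S
  have hdeg1S : degreeOf 1 S = 0 := by
    refine Nat.le_zero.mp ((degreeOf_sum_le _ _ _).trans (Finset.sup_le fun j hj => ?_))
    refine (degreeOf_mul_le _ _ _).trans ?_
    have h1 : degreeOf 1 (C ((Qg n).coeff j / 4 ^ j) * X 2 ^ (2*j) : MvPolynomial (Fin 3) ℝ)
        = 0 := by
      refine Nat.le_zero.mp ((degreeOf_mul_le _ _ _).trans ?_)
      have := degreeOf_pow_le (1 : Fin 3) (X 2 : MvPolynomial (Fin 3) ℝ) (2*j)
      rw [degreeOf_X, if_neg (by decide : ¬(1:Fin 3) = 2), Nat.mul_zero] at this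
      simp only [degreeOf_C]
      omega
    have h2 : degreeOf 1 (U ^ (n - j)) = 0 := by
      refine Nat.le_zero.mp ((degreeOf_pow_le _ _ _).trans ?_)
      rw [hUdef, degreeOf_U_one, Nat.mul_zero]
    omega
  have hcoeffS : coeff m₀ S = 0 := by
    by_contra h
    have := monomial_le_degreeOf 1 (mem_support_iff.2 h)
    rw [hdeg1S, hm₀1] at this
    omega
  have hcoeffP : coeff m₀ (T1 + S) = 2 * (-1:ℝ)^(n-1) := by
    rw [coeff_add, hcoeffT1, hcoeffS, add_zero]
  have hcne : (2 * (-1:ℝ)^(n-1)) ≠ 0 :=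
    mul_ne_zero two_ne_zero (pow_ne_zero _ (by norm_num))
  have hmem : m₀ ∈ (T1 + S).support := mem_support_iff.2 (by rw [hcoeffP]; exact hcne)
  -- upper bounds
  have htdT1 : T1.totalDegree ≤ 2*n := by
    rw [hT1]
    refine (totalDegree_mul _ _).trans ?_
    have hA : (C 2 * X 1 ^ 2 : MvPolynomial (Fin 3) ℝ).totalDegree ≤ 2 := by
      refine (totalDegree_mul _ _).trans ?_
      simp [totalDegree_C, totalDegree_X_pow]
    have hB : (U ^ (n-1)).totalDegree ≤ (n-1) * 2 :=
      (totalDegree_pow _ _).trans (Nat.mul_le_mul_left _ htdU)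
    omega
  have htdS : S.totalDegree ≤ 2*n := by
    rw [hSdef]
    refine (totalDegree_finset_sum _ _).trans (Finset.sup_le fun j hj => ?_)
    obtain ⟨hj1, hjn⟩ := Finset.mem_Icc.mp hj
    refine (totalDegree_mul _ _).trans ?_
    have hA : (C ((Qg n).coeff j / 4 ^ j) * X 2 ^ (2*j) : MvPolynomial (Fin 3) ℝ).totalDegree
        ≤ 2*j := by
      refine (totalDegree_mul _ _).trans ?_
      simp [totalDegree_C, totalDegree_X_pow]
    have hB : (U ^ (n-j)).totalDegree ≤ (n-j) * 2 :=
      (totalDegree_pow _ _).trans (Nat.mul_le_mul_left _ htdU)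
    omega
  have hd0T1 : degreeOf 0 T1 ≤ 2*(n-1) := by
    rw [hT1]
    refine (degreeOf_mul_le _ _ _).trans ?_
    have hA : degreeOf 0 (C 2 * X 1 ^ 2 : MvPolynomial (Fin 3) ℝ) = 0 := by
      refine Nat.le_zero.mp ((degreeOf_mul_le _ _ _).trans ?_)
      have := degreeOf_pow_le (0 : Fin 3) (X 1 : MvPolynomial (Fin 3) ℝ) 2
      rw [degreeOf_X, if_neg (by decide : ¬(0:Fin 3) = 1), Nat.mul_zero] at this
      simp only [degreeOf_C]
      omega
    have hB : degreeOf 0 (U ^ (n-1)) ≤ (n-1) * 2 := by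
      refine (degreeOf_pow_le _ _ _).trans ?_
      exact Nat.mul_le_mul_left _ (hUdef ▸ degreeOf_U_zero)
    omega
  have hd0S : degreeOf 0 S ≤ 2*(n-1) := by
    rw [hSdef]
    refine (degreeOf_sum_le _ _ _).trans (Finset.sup_le fun j hj => ?_)
    obtain ⟨hj1, hjn⟩ := Finset.mem_Icc.mp hj
    refine (degreeOf_mul_le _ _ _).trans ?_
    have hA : degreeOf 0 (C ((Qg n).coeff j / 4 ^ j) * X 2 ^ (2*j) : MvPolynomial (Fin 3) ℝ)
        = 0 := by
      refine Nat.le_zero.mp ((degreeOf_mul_le _ _ _).trans ?_)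
      have := degreeOf_pow_le (0 : Fin 3) (X 2 : MvPolynomial (Fin 3) ℝ) (2*j)
      rw [degreeOf_X, if_neg (by decide : ¬(0:Fin 3) = 2), Nat.mul_zero] at this
      simp only [degreeOf_C]
      omega
    have hB : degreeOf 0 (U ^ (n-j)) ≤ (n-j) * 2 := by
      refine (degreeOf_pow_le _ _ _).trans ?_
      exact Nat.mul_le_mul_left _ (hUdef ▸ degreeOf_U_zero)
    omega
  have hd1T1 : degreeOf 1 T1 ≤ 2 := by
    rw [hT1]
    refine (degreeOf_mul_le _ _ _).trans ?_
    have hA : degreeOf 1 (C 2 * X 1 ^ 2 : MvPolynomial (Fin 3) ℝ) ≤ 2 := by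
      refine (degreeOf_mul_le _ _ _).trans ?_
      have := degreeOf_pow_le (1 : Fin 3) (X 1 : MvPolynomial (Fin 3) ℝ) 2
      rw [degreeOf_X, if_pos rfl, Nat.mul_one] at this
      simp only [degreeOf_C]
      omega
    have hB : degreeOf 1 (U ^ (n-1)) = 0 := by
      refine Nat.le_zero.mp ((degreeOf_pow_le _ _ _).trans ?_)
      rw [hUdef, degreeOf_U_one, Nat.mul_zero]
    omega
  refine ⟨T1 + S, ?_, ?_, ?_, ?_, ?_⟩
  · intro h
    rw [h, coeff_zero] at hcoeffP
    exact hcne hcoeffP.symm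
  · refine le_antisymm ((totalDegree_add _ _).trans (max_le htdT1 htdS)) ?_
    have := le_totalDegree hmem
    have hsum : (m₀.sum fun _ e => e) = 2*(n-1) + 2 := by
      rw [hm₀, Finsupp.sum_add_index' (fun _ => rfl) (fun _ _ _ => rfl),
        Finsupp.sum_single_index rfl, Finsupp.sum_single_index rfl]
    rw [hsum] at this
    omega
  · refine le_antisymm ((degreeOf_add_le _ _ _).trans (max_le hd1T1 (by omega))) ?_
    have := monomial_le_degreeOf 1 hmem
    omega
  · refine le_antisymm ((degreeOf_add_le _ _ _).trans (max_le hd0T1 hd0S)) ?_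
    have := monomial_le_degreeOf 0 hmem
    omega
  · intro x hx1 hx2 l hl0 hl2 xt hxt
    have hu0 : (0:ℝ) < 1 - x^2 := by nlinarith
    have hsq : (0:ℝ) < Real.sqrt (1 - x^2) := Real.sqrt_pos.mpr hu0
    set s : ℝ := l / (2 * Real.sqrt (1 - x^2)) with hs
    have hs0 : 0 ≤ s := div_nonneg hl0 (by positivity)
    have hs1 : s ≤ 1 := by
      rw [hs, div_le_one (by positivity)]
      linarith
    have heval : MvPolynomial.eval ![x, xt, l] (T1 + S)
        = 2 * xt^2 * (1 - x^2)^(n-1)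
          + ∑ j ∈ Finset.Icc 1 n, (Qg n).coeff j / 4^j * l^(2*j) * (1 - x^2)^(n-j) := by
      simp [hT1, hSdef, hUdef, map_sum]
    rw [heval]
    have hs2 : s^2 = l^2 / (4 * (1 - x^2)) := by
      rw [hs, div_pow, mul_pow, Real.sq_sqrt hu0.le]
      norm_num
    have hterm : ∀ j ∈ Finset.Icc 1 n,
        (Qg n).coeff j / 4^j * l^(2*j) * (1 - x^2)^(n-j)
          = ((Qg n).coeff j * (s^2)^j) * (1 - x^2)^n := by
      intro j hj
      obtain ⟨hj1, hjn⟩ := Finset.mem_Icc.mp hj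
      rw [hs2, div_pow, pow_sub₀ _ (ne_of_gt hu0) hjn, pow_mul]
      have h4 : ((4:ℝ) * (1 - x^2))^j ≠ 0 := by positivity
      field_simp
      rw [mul_pow]
      ring
    rw [Finset.sum_congr rfl hterm, ← Finset.sum_mul]
    have hQsum : ∑ j ∈ Finset.Icc 1 n, (Qg n).coeff j * (s^2)^j = (Qg n).eval (s^2) - 1 := by
      have hd : (Qg n).natDegree < n + 1 := Nat.lt_succ_of_le (natDegree_Qg_le n)
      rw [Polynomial.eval_eq_sum_range' hd]
      have hins : Finset.range (n+1) = insert 0 (Finset.Icc 1 n) := by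
        ext j
        simp only [Finset.mem_range, Finset.mem_insert, Finset.mem_Icc]
        omega
      rw [hins, Finset.sum_insert (by simp), Qg_coeff_zero]
      simp
    rw [hQsum, Qg_eval n s (by linarith) hs1]
    have hxt2 : xt^2 = (1 - x^2) * Real.sin (n * Real.arcsin s)^2 := by
      rw [hxt, mul_pow, Real.sq_sqrt hu0.le]
    have hcos : Real.cos (2 * (n:ℝ) * Real.arcsin s)
        = 1 - 2 * Real.sin (n * Real.arcsin s)^2 := by
      rw [show 2 * (n:ℝ) * Real.arcsin s = 2 * ((n:ℝ) * Real.arcsin s) by ring,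
        Real.cos_two_mul]
      nlinarith [Real.sin_sq_add_cos_sq ((n:ℝ) * Real.arcsin s)]
    rw [hcos, hxt2]
    have hun : (1 - x^2) * (1 - x^2)^(n-1) = (1 - x^2)^n := by
      rw [← pow_succ']
      congr 1
      omega
    rw [← hun]
    ring
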